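/- Let Ĉ be the stochastic SC decoder (for an arbitrary partition into index sets I1, I0): a random vector on a common probability space with (X,Y) such that Ĉ_i = C_i for every i ∈ I1 and, for each i ∈ I0, conditionally on (Ĉ_1^{i−1}, Y) the symbol Ĉ_i has distribution μ_{C_i|C_1^{i−1}Y}(· | Ĉ_1^{i−1}, Y) and is conditionally independent of X. Then Prob(T^{−1}(Ĉ) ≠ X) ≤ Σ_{i∈I0} H(C_i | C_1^{i−1}, Y), where H denotes conditional Shannon entropy measured in bits (logarithm base 2). -/

import Mathlib

open Finset

noncomputable def probOf {Ω : Type*} [Fintype Ω] (p : Ω → ℝ) (E : Set Ω) : ℝ :=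
  ∑ ω, E.indicator p ω

noncomputable def condProb {Ω : Type*} [Fintype Ω] (p : Ω → ℝ) (E F : Set Ω) : ℝ :=
  probOf p (E ∩ F) / probOf p F

noncomputable def entropyOf {Ω Z : Type*} [Fintype Ω] [Fintype Z] (p : Ω → ℝ) (V : Ω → Z) : ℝ :=
  ∑ z, Real.negMulLog (probOf p {ω | V ω = z})

noncomputable def condEntropyOf {Ω U V : Type*} [Fintype Ω] [Fintype U] [Fintype V]
    (p : Ω → ℝ) (Uv : Ω → U) (Vv : Ω → V) : ℝ :=
  entropyOf p (fun ω => (Uv ω, Vv ω)) - entropyOf p Vv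

def prefixVec {𝒳 : Type*} {n : ℕ} (c : Fin n → 𝒳) (m : ℕ) (h : m ≤ n) : Fin m → 𝒳 :=
  fun k => c ⟨k.1, lt_of_lt_of_le k.2 h⟩

def scVecGo {𝒳 : Type*} {n : ℕ} (g : (i : Fin n) → (Fin i.1 → 𝒳) → 𝒳) :
    (k : ℕ) → k < n → 𝒳
  | k, hk => g ⟨k, hk⟩ (fun j => scVecGo g j.1 (j.2.trans hk))
termination_by k _ => k
decreasing_by exact j.2

def scVec {𝒳 : Type*} {n : ℕ} (g : (i : Fin n) → (Fin i.1 → 𝒳) → 𝒳) : Fin n → 𝒳 :=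
  fun i => scVecGo g i.1 i.2

def scDec {𝒳 𝒴 : Type*} {n l : ℕ}
    (I1 : Finset (Fin n)) (hc1 : I1.card = l)
    (f : (i : Fin n) → (Fin i.1 → 𝒳) → (Fin n → 𝒴) → 𝒳)
    (c : Fin l → 𝒳) (y : Fin n → 𝒴) : Fin n → 𝒳 :=
  scVec (fun i pref => if h : i ∈ I1 then c ((I1.orderIsoOfFin hc1).symm ⟨i, h⟩) else f i pref y)

def scDecOrd {𝒳 𝒴 : Type*} {n l : ℕ}
    (f : (i : Fin n) → (Fin i.1 → 𝒳) → (Fin n → 𝒴) → 𝒳)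
    (c : Fin l → 𝒳) (y : Fin n → 𝒴) : Fin n → 𝒳 :=
  scVec (fun i pref => if h : i.1 < l then c ⟨i.1, h⟩ else f i pref y)

section aux
variable {Ω : Type*} [Fintype Ω] {p : Ω → ℝ}

lemma probOf_nonneg (hp : ∀ ω, 0 ≤ p ω) (E : Set Ω) : 0 ≤ probOf p E :=
  Finset.sum_nonneg fun ω _ => Set.indicator_nonneg (fun a _ => hp a) ω

lemma probOf_mono (hp : ∀ ω, 0 ≤ p ω) {E F : Set Ω} (h : E ⊆ F) :
    probOf p E ≤ probOf p F :=
  Finset.sum_le_sum fun ω _ => Set.indicator_le_indicator_of_subset h hp ω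

lemma le_probOf (hp : ∀ ω, 0 ≤ p ω) {E : Set Ω} {ω : Ω} (hω : ω ∈ E) :
    p ω ≤ probOf p E := by
  have h := Finset.single_le_sum (f := fun ω => E.indicator p ω)
    (fun a _ => Set.indicator_nonneg (fun a _ => hp a) a) (Finset.mem_univ ω)
  simp only [Set.indicator_of_mem hω] at h
  exact h

lemma probOf_pos_elim (hp : ∀ ω, 0 ≤ p ω) {E : Set Ω} (h : 0 < probOf p E) :
    ∃ ω, ω ∈ E ∧ 0 < p ω := by
  by_contra hc
  push_neg at hc
  have h0 : probOf p E ≤ 0 := Finset.sum_nonpos fun ω _ => by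
    by_cases hω : ω ∈ E
    · rw [Set.indicator_of_mem hω]; exact hc ω hω
    · rw [Set.indicator_of_notMem hω]
  exact absurd h (not_lt.2 h0)

lemma sum_probOf_fiber {Z : Type*} [Fintype Z] (V : Ω → Z) (F : Set Ω) :
    ∑ z : Z, probOf p ({ω | V ω = z} ∩ F) = probOf p F := by
  unfold probOf
  rw [Finset.sum_comm]
  refine Finset.sum_congr rfl fun ω _ => ?_
  rw [Fintype.sum_eq_single (V ω) ?_]
  · by_cases hω : ω ∈ F
    · rw [Set.indicator_of_mem (show ω ∈ {ω' | V ω' = V ω} ∩ F from ⟨rfl, hω⟩), Set.indicator_of_mem hω]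
    · rw [Set.indicator_of_notMem (show ω ∉ {ω' | V ω' = V ω} ∩ F from fun h => hω h.2), Set.indicator_of_notMem hω]
  · intro b hb
    exact Set.indicator_of_notMem (show ω ∉ {ω' | V ω' = b} ∩ F from fun h => hb h.1.symm) _

end aux

lemma perIndex {Ω 𝒳 𝒴 : Type*} [Fintype Ω] [Fintype 𝒳] [Fintype 𝒴]
    {n : ℕ} (p : Ω → ℝ) (hp0 : ∀ ω, 0 ≤ p ω)
    (X Chat : Ω → (Fin n → 𝒳)) (Y : Ω → (Fin n → 𝒴))
    (T : (Fin n → 𝒳) → (Fin n → 𝒳)) (i : Fin n)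
    (hstep : ∀ (cp : Fin i.1 → 𝒳) (y : Fin n → 𝒴),
      0 < probOf p {ω | prefixVec (T (X ω)) i.1 i.2.le = cp ∧ Y ω = y} →
      ∀ (a : 𝒳) (x : Fin n → 𝒳),
        probOf p {ω | Chat ω i = a ∧ X ω = x ∧ prefixVec (Chat ω) i.1 i.2.le = cp ∧ Y ω = y} =
          condProb p {ω | T (X ω) i = a}
              {ω | prefixVec (T (X ω)) i.1 i.2.le = cp ∧ Y ω = y} *
            probOf p {ω | X ω = x ∧ prefixVec (Chat ω) i.1 i.2.le = cp ∧ Y ω = y}) :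
    probOf p {ω | Chat ω i ≠ T (X ω) i ∧
        prefixVec (Chat ω) i.1 i.2.le = prefixVec (T (X ω)) i.1 i.2.le} ≤
      condEntropyOf p (fun ω => T (X ω) i)
        (fun ω => (prefixVec (T (X ω)) i.1 i.2.le, Y ω)) / Real.log 2 := by
  classical
  -- abbreviations
  set Nf : (Fin i.1 → 𝒳) → (Fin n → 𝒴) → ℝ :=
    fun cp y => probOf p {ω | prefixVec (T (X ω)) i.1 i.2.le = cp ∧ Y ω = y} with hNf
  set Pf : 𝒳 → (Fin i.1 → 𝒳) → (Fin n → 𝒴) → ℝ :=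
    fun b cp y => probOf p ({ω | T (X ω) i = b} ∩
      {ω | prefixVec (T (X ω)) i.1 i.2.le = cp ∧ Y ω = y}) with hPf
  set qf : 𝒳 → (Fin i.1 → 𝒳) → (Fin n → 𝒴) → ℝ :=
    fun b cp y => condProb p {ω | T (X ω) i = b}
      {ω | prefixVec (T (X ω)) i.1 i.2.le = cp ∧ Y ω = y} with hqfd
  set Mf : (Fin n → 𝒳) → (Fin i.1 → 𝒳) → (Fin n → 𝒴) → ℝ :=
    fun x cp y => probOf p {ω | X ω = x ∧ prefixVec (Chat ω) i.1 i.2.le = cp ∧ Y ω = y} with hMf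
  have hqf : ∀ b cp y, qf b cp y = Pf b cp y / Nf cp y := fun _ _ _ => rfl
  have hPle : ∀ b cp y, Pf b cp y ≤ Nf cp y := fun b cp y =>
    probOf_mono hp0 Set.inter_subset_right
  have hP0 : ∀ b cp y, 0 ≤ Pf b cp y := fun _ _ _ => probOf_nonneg hp0 _
  have hN0 : ∀ cp y, 0 ≤ Nf cp y := fun _ _ => probOf_nonneg hp0 _
  have hM0 : ∀ x cp y, 0 ≤ Mf x cp y := fun _ _ _ => probOf_nonneg hp0 _
  have hlogq : ∀ b cp y, 0 ≤ -Real.log (qf b cp y) := by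
    intro b cp y
    rcases eq_or_lt_of_le (hN0 cp y) with h0 | hN
    · rw [hqf, ← h0, div_zero, Real.log_zero, neg_zero]
    · have hq1 : qf b cp y ≤ 1 := by
        rw [hqf]; exact div_le_one_of_le₀ (hPle b cp y) (hN0 cp y)
      have hq0 : 0 ≤ qf b cp y := by
        rw [hqf]; exact div_nonneg (hP0 b cp y) (hN0 cp y)
      simpa using Real.log_nonpos hq0 hq1
  have hsum1 : ∀ cp y, ∑ b, Pf b cp y = Nf cp y := fun cp y =>
    sum_probOf_fiber (fun ω => T (X ω) i) _
  have hlog2 : 0 < Real.log 2 := Real.log_pos (by norm_num)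
  have hinv2 : 1 ≤ (Real.log 2)⁻¹ := one_le_inv₀ hlog2 |>.mpr
    (by linarith [Real.log_le_sub_one_of_pos (show (0:ℝ) < 2 by norm_num)])
    -- Claim 1 : decompose error probability over (x, y, a)
  have claim1 : probOf p {ω | Chat ω i ≠ T (X ω) i ∧
        prefixVec (Chat ω) i.1 i.2.le = prefixVec (T (X ω)) i.1 i.2.le} =
      ∑ x : Fin n → 𝒳, ∑ y : Fin n → 𝒴, ∑ a : 𝒳,
        (if T x i = a then 0 else probOf p {ω | Chat ω i = a ∧ X ω = x ∧
          prefixVec (Chat ω) i.1 i.2.le = prefixVec (T x) i.1 i.2.le ∧ Y ω = y}) := by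
    have expand : ∀ (x : Fin n → 𝒳) (y : Fin n → 𝒴) (a : 𝒳),
        (if T x i = a then 0 else probOf p {ω | Chat ω i = a ∧ X ω = x ∧
          prefixVec (Chat ω) i.1 i.2.le = prefixVec (T x) i.1 i.2.le ∧ Y ω = y}) =
        ∑ ω, (if T x i = a then 0 else ({ω | Chat ω i = a ∧ X ω = x ∧
          prefixVec (Chat ω) i.1 i.2.le = prefixVec (T x) i.1 i.2.le ∧ Y ω = y} : Set Ω).indicator p ω) := by
      intro x y a
      split_ifs with h
      · simp
      · rfl
    simp only [expand]
    have h1 : (∑ x : Fin n → 𝒳, ∑ y : Fin n → 𝒴, ∑ a : 𝒳, ∑ ω : Ω,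
        (if T x i = a then 0 else ({ω | Chat ω i = a ∧ X ω = x ∧
          prefixVec (Chat ω) i.1 i.2.le = prefixVec (T x) i.1 i.2.le ∧ Y ω = y} : Set Ω).indicator p ω)) =
        ∑ x : Fin n → 𝒳, ∑ y : Fin n → 𝒴, ∑ ω : Ω, ∑ a : 𝒳,
        (if T x i = a then 0 else ({ω | Chat ω i = a ∧ X ω = x ∧
          prefixVec (Chat ω) i.1 i.2.le = prefixVec (T x) i.1 i.2.le ∧ Y ω = y} : Set Ω).indicator p ω) :=
      Finset.sum_congr rfl fun x _ => Finset.sum_congr rfl fun y _ => Finset.sum_comm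
    have h2 : (∑ x : Fin n → 𝒳, ∑ y : Fin n → 𝒴, ∑ ω : Ω, ∑ a : 𝒳,
        (if T x i = a then 0 else ({ω | Chat ω i = a ∧ X ω = x ∧
          prefixVec (Chat ω) i.1 i.2.le = prefixVec (T x) i.1 i.2.le ∧ Y ω = y} : Set Ω).indicator p ω)) =
        ∑ x : Fin n → 𝒳, ∑ ω : Ω, ∑ y : Fin n → 𝒴, ∑ a : 𝒳,
        (if T x i = a then 0 else ({ω | Chat ω i = a ∧ X ω = x ∧
          prefixVec (Chat ω) i.1 i.2.le = prefixVec (T x) i.1 i.2.le ∧ Y ω = y} : Set Ω).indicator p ω) :=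
      Finset.sum_congr rfl fun x _ => Finset.sum_comm
    have h3 : (∑ x : Fin n → 𝒳, ∑ ω : Ω, ∑ y : Fin n → 𝒴, ∑ a : 𝒳,
        (if T x i = a then 0 else ({ω | Chat ω i = a ∧ X ω = x ∧
          prefixVec (Chat ω) i.1 i.2.le = prefixVec (T x) i.1 i.2.le ∧ Y ω = y} : Set Ω).indicator p ω)) =
        ∑ ω : Ω, ∑ x : Fin n → 𝒳, ∑ y : Fin n → 𝒴, ∑ a : 𝒳,
        (if T x i = a then 0 else ({ω | Chat ω i = a ∧ X ω = x ∧
          prefixVec (Chat ω) i.1 i.2.le = prefixVec (T x) i.1 i.2.le ∧ Y ω = y} : Set Ω).indicator p ω) :=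
      Finset.sum_comm
    rw [h1, h2, h3]
    unfold probOf
    refine Finset.sum_congr rfl fun ω _ => ?_
    rw [Fintype.sum_eq_single (X ω) ?_]
    · rw [Fintype.sum_eq_single (Y ω) ?_]
      · rw [Fintype.sum_eq_single (Chat ω i) ?_]
        · by_cases heq : Chat ω i = T (X ω) i
          · rw [if_pos heq.symm]
            exact Set.indicator_of_notMem (fun hh => hh.1 heq) _
          · rw [if_neg (fun h => heq h.symm)]
            by_cases hpre : prefixVec (Chat ω) i.1 i.2.le = prefixVec (T (X ω)) i.1 i.2.le
            · rw [Set.indicator_of_mem (show ω ∈ {ω' | Chat ω' i ≠ T (X ω') i ∧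
                  prefixVec (Chat ω') i.1 i.2.le = prefixVec (T (X ω')) i.1 i.2.le} from ⟨heq, hpre⟩)]
              exact (Set.indicator_of_mem (show ω ∈ {ω' | Chat ω' i = Chat ω i ∧ X ω' = X ω ∧
                  prefixVec (Chat ω') i.1 i.2.le = prefixVec (T (X ω)) i.1 i.2.le ∧ Y ω' = Y ω}
                from ⟨rfl, rfl, hpre, rfl⟩) p).symm
            · rw [Set.indicator_of_notMem (show ω ∉ {ω' | Chat ω' i ≠ T (X ω') i ∧
                  prefixVec (Chat ω') i.1 i.2.le = prefixVec (T (X ω')) i.1 i.2.le}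
                from fun hh => hpre hh.2)]
              exact (Set.indicator_of_notMem (fun hh => hpre hh.2.2.1) p).symm
        · intro a ha
          split_ifs with h
          · rfl
          · exact Set.indicator_of_notMem (fun hh => ha hh.1.symm) _
      · intro y hy
        refine Finset.sum_eq_zero fun a _ => ?_
        split_ifs with h
        · rfl
        · exact Set.indicator_of_notMem (fun hh => hy hh.2.2.2.symm) _
    · intro x hx
      refine Finset.sum_eq_zero fun y _ => Finset.sum_eq_zero fun a _ => ?_
      split_ifs with h
      · rfl
      · exact Set.indicator_of_notMem (fun hh => hx hh.2.1.symm) _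
    -- Claim 2+3 : per (x,y) bound
  have claim23 : ∀ (x : Fin n → 𝒳) (y : Fin n → 𝒴),
      (∑ a : 𝒳, (if T x i = a then 0 else probOf p {ω | Chat ω i = a ∧ X ω = x ∧
          prefixVec (Chat ω) i.1 i.2.le = prefixVec (T x) i.1 i.2.le ∧ Y ω = y})) ≤
        (Real.log 2)⁻¹ * ((-Real.log (qf (T x i) (prefixVec (T x) i.1 i.2.le) y)) *
          Mf x (prefixVec (T x) i.1 i.2.le) y) := by
    intro x y
    by_cases hM : Mf x (prefixVec (T x) i.1 i.2.le) y = 0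
    · have hz : ∀ a : 𝒳, (if T x i = a then 0 else probOf p {ω | Chat ω i = a ∧ X ω = x ∧
          prefixVec (Chat ω) i.1 i.2.le = prefixVec (T x) i.1 i.2.le ∧ Y ω = y}) = 0 := by
        intro a
        split_ifs with h
        · rfl
        · refine le_antisymm ?_ (probOf_nonneg hp0 _)
          have hle : probOf p {ω | Chat ω i = a ∧ X ω = x ∧
              prefixVec (Chat ω) i.1 i.2.le = prefixVec (T x) i.1 i.2.le ∧ Y ω = y} ≤
              Mf x (prefixVec (T x) i.1 i.2.le) y :=
            probOf_mono hp0 (fun ω hh => ⟨hh.2.1, hh.2.2.1, hh.2.2.2⟩)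
          rw [hM] at hle
          exact hle
      rw [Finset.sum_eq_zero (fun a _ => hz a), hM, mul_zero, mul_zero]
    · have hMpos : 0 < Mf x (prefixVec (T x) i.1 i.2.le) y :=
        lt_of_le_of_ne (hM0 _ _ _) (Ne.symm hM)
      obtain ⟨ω₀, hω₀, hpω₀⟩ := probOf_pos_elim hp0 (show 0 < probOf p {ω | X ω = x ∧
        prefixVec (Chat ω) i.1 i.2.le = prefixVec (T x) i.1 i.2.le ∧ Y ω = y} from hMpos)
      have hNpos : 0 < Nf (prefixVec (T x) i.1 i.2.le) y :=
        lt_of_lt_of_le hpω₀ (le_probOf hp0 (show ω₀ ∈ {ω | prefixVec (T (X ω)) i.1 i.2.le =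
          prefixVec (T x) i.1 i.2.le ∧ Y ω = y} from ⟨by rw [hω₀.1], hω₀.2.2⟩))
      have hPpos : 0 < Pf (T x i) (prefixVec (T x) i.1 i.2.le) y :=
        lt_of_lt_of_le hpω₀ (le_probOf hp0 (show ω₀ ∈ ({ω | T (X ω) i = T x i} ∩
          {ω | prefixVec (T (X ω)) i.1 i.2.le = prefixVec (T x) i.1 i.2.le ∧ Y ω = y})
          from ⟨show T (X ω₀) i = T x i by rw [hω₀.1], by rw [hω₀.1], hω₀.2.2⟩))
      have hst := hstep (prefixVec (T x) i.1 i.2.le) y hNpos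
      have hrw : ∀ a : 𝒳, (if T x i = a then 0 else probOf p {ω | Chat ω i = a ∧ X ω = x ∧
          prefixVec (Chat ω) i.1 i.2.le = prefixVec (T x) i.1 i.2.le ∧ Y ω = y}) =
          qf a (prefixVec (T x) i.1 i.2.le) y * Mf x (prefixVec (T x) i.1 i.2.le) y -
          (if T x i = a then qf a (prefixVec (T x) i.1 i.2.le) y *
            Mf x (prefixVec (T x) i.1 i.2.le) y else 0) := by
        intro a
        split_ifs with h
        · ring
        · rw [sub_zero]
          exact hst a x
      rw [Finset.sum_congr rfl (fun a _ => hrw a), Finset.sum_sub_distrib,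
        Finset.sum_ite_eq, if_pos (Finset.mem_univ _), ← Finset.sum_mul]
      have hq1 : (∑ a : 𝒳, qf a (prefixVec (T x) i.1 i.2.le) y) = 1 := by
        rw [Finset.sum_congr rfl (fun a _ => hqf a (prefixVec (T x) i.1 i.2.le) y),
          ← Finset.sum_div, hsum1, div_self hNpos.ne']
      rw [hq1, one_mul]
      have hq0 : 0 < qf (T x i) (prefixVec (T x) i.1 i.2.le) y := by
        rw [hqf]; exact div_pos hPpos hNpos
      have hq1' : qf (T x i) (prefixVec (T x) i.1 i.2.le) y ≤ 1 := by
        rw [hqf]; exact div_le_one_of_le₀ (hPle _ _ _) (hN0 _ _)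
      have hlg : 1 - qf (T x i) (prefixVec (T x) i.1 i.2.le) y ≤
          -Real.log (qf (T x i) (prefixVec (T x) i.1 i.2.le) y) := by
        have := Real.log_le_sub_one_of_pos hq0; linarith
      have hlgpos : 0 ≤ -Real.log (qf (T x i) (prefixVec (T x) i.1 i.2.le) y) := by
        have := Real.log_nonpos hq0.le hq1'; linarith
      have hMn : 0 ≤ Mf x (prefixVec (T x) i.1 i.2.le) y := hM0 _ _ _
      nlinarith [mul_le_mul_of_nonneg_right hlg hMn,
        le_mul_of_one_le_left (mul_nonneg hlgpos hMn) hinv2]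
  -- Claim 4 : regroup over (b, cp)
  have claim4 : ∀ y : Fin n → 𝒴,
      (∑ x : Fin n → 𝒳, (-Real.log (qf (T x i) (prefixVec (T x) i.1 i.2.le) y)) *
        Mf x (prefixVec (T x) i.1 i.2.le) y) ≤
      ∑ z : 𝒳 × (Fin i.1 → 𝒳), (-Real.log (qf z.1 z.2 y)) * Pf z.1 z.2 y := by
    intro y
    rw [← Finset.sum_fiberwise_of_maps_to (t := (Finset.univ : Finset (𝒳 × (Fin i.1 → 𝒳))))
      (g := fun x : Fin n → 𝒳 => ((T x i, prefixVec (T x) i.1 i.2.le) : 𝒳 × (Fin i.1 → 𝒳)))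
      (fun x _ => Finset.mem_univ _)
      (fun x => (-Real.log (qf (T x i) (prefixVec (T x) i.1 i.2.le) y)) *
        Mf x (prefixVec (T x) i.1 i.2.le) y)]
    refine Finset.sum_le_sum fun z _ => ?_
    have hcg : ∀ x ∈ Finset.univ.filter (fun x : Fin n → 𝒳 =>
        (T x i, prefixVec (T x) i.1 i.2.le) = z),
        (-Real.log (qf (T x i) (prefixVec (T x) i.1 i.2.le) y)) *
          Mf x (prefixVec (T x) i.1 i.2.le) y =
        (-Real.log (qf z.1 z.2 y)) * Mf x z.2 y := by
      intro x hx
      have h' := (Finset.mem_filter.mp hx).2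
      rw [← h']
    rw [Finset.sum_congr rfl hcg, ← Finset.mul_sum]
    refine mul_le_mul_of_nonneg_left ?_ (hlogq z.1 z.2 y)
    show (∑ x ∈ Finset.univ.filter (fun x : Fin n → 𝒳 =>
        (T x i, prefixVec (T x) i.1 i.2.le) = z), Mf x z.2 y) ≤ Pf z.1 z.2 y
    have expand : ∀ x : Fin n → 𝒳, Mf x z.2 y = ∑ ω : Ω, ({ω | X ω = x ∧
        prefixVec (Chat ω) i.1 i.2.le = z.2 ∧ Y ω = y} : Set Ω).indicator p ω := fun _ => rfl
    rw [Finset.sum_congr rfl (fun x _ => expand x), Finset.sum_comm]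
    show _ ≤ ∑ ω : Ω, (({ω | T (X ω) i = z.1} ∩
      {ω | prefixVec (T (X ω)) i.1 i.2.le = z.2 ∧ Y ω = y}) : Set Ω).indicator p ω
    refine Finset.sum_le_sum fun ω _ => ?_
    by_cases hxf : ((T (X ω) i, prefixVec (T (X ω)) i.1 i.2.le) : 𝒳 × (Fin i.1 → 𝒳)) = z
    · rw [Finset.sum_eq_single_of_mem (X ω) (Finset.mem_filter.mpr ⟨Finset.mem_univ _, hxf⟩)
        (fun x _ hne => Set.indicator_of_notMem (fun hh => hne (hh.1.symm)) p)]
      by_cases hmem : ω ∈ {ω' | X ω' = X ω ∧ prefixVec (Chat ω') i.1 i.2.le = z.2 ∧ Y ω' = y}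
      · rw [Set.indicator_of_mem hmem, Set.indicator_of_mem (show ω ∈ ({ω' | T (X ω') i = z.1} ∩
          {ω' | prefixVec (T (X ω')) i.1 i.2.le = z.2 ∧ Y ω' = y})
          from ⟨congrArg Prod.fst hxf, congrArg Prod.snd hxf, hmem.2.2⟩)]
      · rw [Set.indicator_of_notMem hmem]
        exact Set.indicator_nonneg (fun a _ => hp0 a) ω
    · rw [Finset.sum_eq_zero (fun x hxs => Set.indicator_of_notMem
        (fun hh => hxf (by rw [hh.1]; exact (Finset.mem_filter.mp hxs).2)) p)]
      exact Set.indicator_nonneg (fun a _ => hp0 a) ω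
  -- Claim 5 : identification with conditional entropy
  have key5 : ∀ (cp : Fin i.1 → 𝒳) (y : Fin n → 𝒴),
      (∑ b : 𝒳, (-Real.log (qf b cp y)) * Pf b cp y) =
        (∑ b : 𝒳, Real.negMulLog (Pf b cp y)) - Real.negMulLog (Nf cp y) := by
    intro cp y
    have hterm : ∀ b : 𝒳, (-Real.log (qf b cp y)) * Pf b cp y =
        Real.negMulLog (Pf b cp y) + Pf b cp y * Real.log (Nf cp y) := by
      intro b
      rcases eq_or_lt_of_le (hP0 b cp y) with h0 | hP
      · rw [← h0, Real.negMulLog_zero, mul_zero, zero_mul, add_zero]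
      · have hN : 0 < Nf cp y := lt_of_lt_of_le hP (hPle b cp y)
        rw [hqf, Real.log_div hP.ne' hN.ne', Real.negMulLog]
        ring
    rw [Finset.sum_congr rfl (fun b _ => hterm b), Finset.sum_add_distrib, ← Finset.sum_mul,
      hsum1, Real.negMulLog]
    ring
  have e1 : entropyOf p (fun ω => (T (X ω) i, (prefixVec (T (X ω)) i.1 i.2.le, Y ω))) =
      ∑ b : 𝒳, ∑ cp : Fin i.1 → 𝒳, ∑ y : Fin n → 𝒴, Real.negMulLog (Pf b cp y) := by
    unfold entropyOf
    rw [Fintype.sum_prod_type]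
    refine Finset.sum_congr rfl fun b _ => ?_
    rw [Fintype.sum_prod_type]
    refine Finset.sum_congr rfl fun cp _ => Finset.sum_congr rfl fun y _ => ?_
    show Real.negMulLog (probOf p _) = Real.negMulLog (probOf p _)
    congr 1
    congr 1
    ext ω
    simp only [Set.mem_setOf_eq, Set.mem_inter_iff, Prod.mk.injEq]
    try tauto
  have e2 : entropyOf p (fun ω => (prefixVec (T (X ω)) i.1 i.2.le, Y ω)) =
      ∑ cp : Fin i.1 → 𝒳, ∑ y : Fin n → 𝒴, Real.negMulLog (Nf cp y) := by
    unfold entropyOf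
    rw [Fintype.sum_prod_type]
    refine Finset.sum_congr rfl fun cp _ => Finset.sum_congr rfl fun y _ => ?_
    show Real.negMulLog (probOf p _) = Real.negMulLog (probOf p _)
    congr 1
    congr 1
    ext ω
    simp only [Set.mem_setOf_eq, Prod.mk.injEq]
  have claim5 : (∑ y : Fin n → 𝒴, ∑ z : 𝒳 × (Fin i.1 → 𝒳),
      (-Real.log (qf z.1 z.2 y)) * Pf z.1 z.2 y) =
      condEntropyOf p (fun ω => T (X ω) i)
        (fun ω => (prefixVec (T (X ω)) i.1 i.2.le, Y ω)) := by
    have r1 : (∑ y : Fin n → 𝒴, ∑ z : 𝒳 × (Fin i.1 → 𝒳),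
        (-Real.log (qf z.1 z.2 y)) * Pf z.1 z.2 y) =
        ∑ y : Fin n → 𝒴, ∑ b : 𝒳, ∑ cp : Fin i.1 → 𝒳,
          (-Real.log (qf b cp y)) * Pf b cp y :=
      Finset.sum_congr rfl fun y _ => by rw [Fintype.sum_prod_type]
    have r2 : (∑ y : Fin n → 𝒴, ∑ b : 𝒳, ∑ cp : Fin i.1 → 𝒳,
        (-Real.log (qf b cp y)) * Pf b cp y) =
        ∑ y : Fin n → 𝒴, ∑ cp : Fin i.1 → 𝒳, ∑ b : 𝒳,
          (-Real.log (qf b cp y)) * Pf b cp y :=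
      Finset.sum_congr rfl fun y _ => Finset.sum_comm
    have r3 : (∑ y : Fin n → 𝒴, ∑ cp : Fin i.1 → 𝒳, ∑ b : 𝒳,
        (-Real.log (qf b cp y)) * Pf b cp y) =
        ∑ cp : Fin i.1 → 𝒳, ∑ y : Fin n → 𝒴, ∑ b : 𝒳,
          (-Real.log (qf b cp y)) * Pf b cp y := Finset.sum_comm
    rw [r1, r2, r3]
    rw [Finset.sum_congr rfl (fun cp _ => Finset.sum_congr rfl (fun y _ => key5 cp y))]
    unfold condEntropyOf
    rw [e1, e2]
    rw [Finset.sum_congr rfl (fun cp _ => Finset.sum_sub_distrib (s := (Finset.univ : Finset (Fin n → 𝒴))) _ _),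
      Finset.sum_sub_distrib]
    congr 1
    have r4 : (∑ cp : Fin i.1 → 𝒳, ∑ y : Fin n → 𝒴, ∑ b : 𝒳, Real.negMulLog (Pf b cp y)) =
        ∑ cp : Fin i.1 → 𝒳, ∑ b : 𝒳, ∑ y : Fin n → 𝒴, Real.negMulLog (Pf b cp y) :=
      Finset.sum_congr rfl fun cp _ => Finset.sum_comm
    rw [r4]
    exact Finset.sum_comm
  -- assemble
  have step1 : probOf p {ω | Chat ω i ≠ T (X ω) i ∧
      prefixVec (Chat ω) i.1 i.2.le = prefixVec (T (X ω)) i.1 i.2.le} ≤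
      ∑ x : Fin n → 𝒳, ∑ y : Fin n → 𝒴,
        (Real.log 2)⁻¹ * ((-Real.log (qf (T x i) (prefixVec (T x) i.1 i.2.le) y)) *
          Mf x (prefixVec (T x) i.1 i.2.le) y) := by
    rw [claim1]
    exact Finset.sum_le_sum fun x _ => Finset.sum_le_sum fun y _ => claim23 x y
  have step2 : (∑ x : Fin n → 𝒳, ∑ y : Fin n → 𝒴,
      (Real.log 2)⁻¹ * ((-Real.log (qf (T x i) (prefixVec (T x) i.1 i.2.le) y)) *
        Mf x (prefixVec (T x) i.1 i.2.le) y)) =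
      (Real.log 2)⁻¹ * ∑ y : Fin n → 𝒴, ∑ x : Fin n → 𝒳,
        ((-Real.log (qf (T x i) (prefixVec (T x) i.1 i.2.le) y)) *
          Mf x (prefixVec (T x) i.1 i.2.le) y) := by
    rw [Finset.mul_sum]
    rw [show (∑ y : Fin n → 𝒴, (Real.log 2)⁻¹ * ∑ x : Fin n → 𝒳,
        ((-Real.log (qf (T x i) (prefixVec (T x) i.1 i.2.le) y)) *
          Mf x (prefixVec (T x) i.1 i.2.le) y)) =
      ∑ y : Fin n → 𝒴, ∑ x : Fin n → 𝒳, (Real.log 2)⁻¹ *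
        ((-Real.log (qf (T x i) (prefixVec (T x) i.1 i.2.le) y)) *
          Mf x (prefixVec (T x) i.1 i.2.le) y)
      from Finset.sum_congr rfl fun y _ => Finset.mul_sum _ _ _]
    exact Finset.sum_comm
  refine le_trans step1 ?_
  rw [step2]
  have step3 : (∑ y : Fin n → 𝒴, ∑ x : Fin n → 𝒳,
      ((-Real.log (qf (T x i) (prefixVec (T x) i.1 i.2.le) y)) *
        Mf x (prefixVec (T x) i.1 i.2.le) y)) ≤
      ∑ y : Fin n → 𝒴, ∑ z : 𝒳 × (Fin i.1 → 𝒳), (-Real.log (qf z.1 z.2 y)) * Pf z.1 z.2 y :=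
    Finset.sum_le_sum fun y _ => claim4 y
  refine le_trans (mul_le_mul_of_nonneg_left step3 (inv_nonneg.mpr hlog2.le)) ?_
  rw [claim5, div_eq_mul_inv, mul_comm]

/-- for an arbitrary partition `(I1, I0)`, the stochastic SC decoder `Ĉ`
(with `Ĉ_i = C_i` on `I1` and, on `I0`, sampling from `μ_{C_i|C_1^{i-1}Y}(·|Ĉ_1^{i-1},Y)`
conditionally independently of `X`) satisfies
`Prob(T⁻¹(Ĉ) ≠ X) ≤ Σ_{i ∈ I0} H(C_i | C_1^{i-1}, Y)` with entropy in bits. -/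
theorem stmt7
    {Ω 𝒳 𝒴 : Type*} [Fintype Ω] [Fintype 𝒳] [Fintype 𝒴]
    (hcard : 2 ≤ Fintype.card 𝒳)
    (n l : ℕ) (hl : l ≤ n)
    (p : Ω → ℝ) (hp0 : ∀ ω, 0 ≤ p ω) (hp1 : ∑ ω, p ω = 1)
    (X : Ω → (Fin n → 𝒳)) (Y : Ω → (Fin n → 𝒴)) (Chat : Ω → (Fin n → 𝒳))
    (A : (Fin n → 𝒳) → (Fin l → 𝒳)) (B : (Fin n → 𝒳) → (Fin (n - l) → 𝒳))
    (I1 I0 : Finset (Fin n))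
    (hdisj : Disjoint I1 I0) (huniv : I1 ∪ I0 = Finset.univ)
    (hc1 : I1.card = l) (hc0 : I0.card = n - l)
    (T : (Fin n → 𝒳) ≃ (Fin n → 𝒳))
    (hT1 : ∀ x (j : Fin l), T x (I1.orderIsoOfFin hc1 j).1 = A x j)
    (hT0 : ∀ x (j : Fin (n - l)), T x (I0.orderIsoOfFin hc0 j).1 = B x j)
    (hkeep : ∀ ω, ∀ i ∈ I1, Chat ω i = T (X ω) i)
    (hstep : ∀ i ∈ I0, ∀ (cp : Fin i.1 → 𝒳) (y : Fin n → 𝒴),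
      0 < probOf p {ω | prefixVec (T (X ω)) i.1 i.2.le = cp ∧ Y ω = y} →
      ∀ (a : 𝒳) (x : Fin n → 𝒳),
        probOf p {ω | Chat ω i = a ∧ X ω = x ∧ prefixVec (Chat ω) i.1 i.2.le = cp ∧ Y ω = y} =
          condProb p {ω | T (X ω) i = a}
              {ω | prefixVec (T (X ω)) i.1 i.2.le = cp ∧ Y ω = y} *
            probOf p {ω | X ω = x ∧ prefixVec (Chat ω) i.1 i.2.le = cp ∧ Y ω = y}) :
    probOf p {ω | T.symm (Chat ω) ≠ X ω} ≤
      ∑ i ∈ I0,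
        condEntropyOf p (fun ω => T (X ω) i)
          (fun ω => (prefixVec (T (X ω)) i.1 i.2.le, Y ω)) / Real.log 2 := by
  classical
  have hA : probOf p {ω | T.symm (Chat ω) ≠ X ω} ≤
      ∑ i ∈ I0, probOf p {ω | Chat ω i ≠ T (X ω) i ∧
        prefixVec (Chat ω) i.1 i.2.le = prefixVec (T (X ω)) i.1 i.2.le} := by
    unfold probOf
    rw [Finset.sum_comm]
    refine Finset.sum_le_sum fun ω _ => ?_
    by_cases hω : T.symm (Chat ω) = X ω
    · rw [Set.indicator_of_notMem (show ω ∉ {ω' | T.symm (Chat ω') ≠ X ω'} from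
        fun h => h hω)]
      exact Finset.sum_nonneg fun i _ => Set.indicator_nonneg (fun a _ => hp0 a) ω
    · have hne : Chat ω ≠ T (X ω) := fun h => hω (by rw [h, Equiv.symm_apply_apply])
      obtain ⟨j, hj⟩ := Function.ne_iff.mp hne
      have hsne : (Finset.univ.filter (fun j : Fin n => Chat ω j ≠ T (X ω) j)).Nonempty :=
        ⟨j, Finset.mem_filter.mpr ⟨Finset.mem_univ _, hj⟩⟩
      set i0 := (Finset.univ.filter (fun j : Fin n => Chat ω j ≠ T (X ω) j)).min' hsne with hi0
      have hi0s : i0 ∈ Finset.univ.filter (fun j : Fin n => Chat ω j ≠ T (X ω) j) :=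
        Finset.min'_mem _ hsne
      have hi0ne : Chat ω i0 ≠ T (X ω) i0 := (Finset.mem_filter.mp hi0s).2
      have hi0I0 : i0 ∈ I0 := by
        have hu : i0 ∈ I1 ∪ I0 := huniv ▸ Finset.mem_univ i0
        rcases Finset.mem_union.mp hu with h | h
        · exact absurd (hkeep ω i0 h) hi0ne
        · exact h
      have hpre : prefixVec (Chat ω) i0.1 i0.2.le = prefixVec (T (X ω)) i0.1 i0.2.le := by
        funext k
        show Chat ω ⟨k.1, lt_of_lt_of_le k.2 i0.2.le⟩ = T (X ω) ⟨k.1, lt_of_lt_of_le k.2 i0.2.le⟩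
        by_contra hk
        have hks : (⟨k.1, lt_of_lt_of_le k.2 i0.2.le⟩ : Fin n) ∈
            Finset.univ.filter (fun j : Fin n => Chat ω j ≠ T (X ω) j) :=
          Finset.mem_filter.mpr ⟨Finset.mem_univ _, hk⟩
        have hle := Finset.min'_le _ _ hks
        rw [← hi0] at hle
        have : i0.1 ≤ k.1 := hle
        omega
      have hmem : ω ∈ {ω' | Chat ω' i0 ≠ T (X ω') i0 ∧
          prefixVec (Chat ω') i0.1 i0.2.le = prefixVec (T (X ω')) i0.1 i0.2.le} :=
        ⟨hi0ne, hpre⟩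
      calc ({ω' | T.symm (Chat ω') ≠ X ω'} : Set Ω).indicator p ω ≤ p ω := by
            by_cases hm : ω ∈ ({ω' | T.symm (Chat ω') ≠ X ω'} : Set Ω)
            · rw [Set.indicator_of_mem hm]
            · rw [Set.indicator_of_notMem hm]; exact hp0 ω
        _ = ({ω' | Chat ω' i0 ≠ T (X ω') i0 ∧
              prefixVec (Chat ω') i0.1 i0.2.le = prefixVec (T (X ω')) i0.1 i0.2.le} : Set Ω).indicator p ω :=
            (Set.indicator_of_mem hmem p).symm
        _ ≤ ∑ i ∈ I0, ({ω' | Chat ω' i ≠ T (X ω') i ∧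
              prefixVec (Chat ω') i.1 i.2.le = prefixVec (T (X ω')) i.1 i.2.le} : Set Ω).indicator p ω :=
            Finset.single_le_sum (f := fun i => ({ω' | Chat ω' i ≠ T (X ω') i ∧
              prefixVec (Chat ω') i.1 i.2.le = prefixVec (T (X ω')) i.1 i.2.le} : Set Ω).indicator p ω)
              (fun i _ => Set.indicator_nonneg (fun a _ => hp0 a) ω) hi0I0
  refine le_trans hA (Finset.sum_le_sum fun i hi => ?_)
  exact perIndex p hp0 X Chat Y (fun x => T x) i (hstep i hi)
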